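/- For every k ≥ 1 and every t ≥ 1, there exists a family of n = 2^{k(t-1)+1} + 2^{k(t-1)} - 1 intervals on a line whose overlap graph requires at least t colors in any k-CF coloring; consequently, the maximum k-CF chromatic number of circle graphs on n vertices is Ω(log n) for every fixed k. -/

import Mathlib

/-- Two intervals overlap: they intersect but neither contains the other. -/
def Overlap {n : ℕ} (a b : Fin n → ℝ) (i j : Fin n) : Prop :=
  (a i < a j ∧ a j < b i ∧ b i < b j) ∨ (a j < a i ∧ a i < b j ∧ b j < b i)

/-- No multiple of `N` lies strictly between consecutive multiples of `N`. -/
lemma CF17.no_between (N b d : ℕ) : ¬ (b * N < d * N ∧ d * N < (b + 1) * N) := by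
  rintro ⟨h1, h2⟩
  have hb : b < d := Nat.lt_of_mul_lt_mul_right h1
  have hd : d < b + 1 := Nat.lt_of_mul_lt_mul_right h2
  omega

/-- Two dyadic blocks never "cross". -/
lemma CF17.dyadic_no_cross (e e' b b' : ℕ) :
    ¬ (b * 2 ^ e < b' * 2 ^ e' ∧ b' * 2 ^ e' < (b + 1) * 2 ^ e ∧
        (b + 1) * 2 ^ e < (b' + 1) * 2 ^ e') := by
  rintro ⟨h1, h2, h3⟩
  rcases le_total e e' with h | h
  · have he : b' * 2 ^ e' = (b' * 2 ^ (e' - e)) * 2 ^ e := by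
      rw [mul_assoc, ← pow_add]
      congr 2
      omega
    rw [he] at h1 h2
    exact CF17.no_between _ _ _ ⟨h1, h2⟩
  · have he : (b + 1) * 2 ^ e = ((b + 1) * 2 ^ (e - e')) * 2 ^ e' := by
      rw [mul_assoc, ← pow_add]
      congr 2
      omega
    rw [he] at h2 h3
    exact CF17.no_between _ _ _ ⟨h2, h3⟩

/-- Left endpoints of the interval family. Indices `v < 2^m` are the "chain"
intervals; indices `v ≥ 2^m` encode dyadic "tree" intervals. -/
noncomputable def CF17.aFun (m v : ℕ) : ℝ :=
  if v < 2 ^ m then (v : ℝ) + 1 / 2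
  else ((v - 2 ^ m + 1 - 2 ^ Nat.log 2 (v - 2 ^ m + 1)) *
      2 ^ (m - Nat.log 2 (v - 2 ^ m + 1)) : ℕ)

/-- Right endpoints of the interval family. -/
noncomputable def CF17.bFun (m v : ℕ) : ℝ :=
  if v < 2 ^ m then (2 ^ (m + 1) + 1 : ℝ) - v
  else ((v - 2 ^ m + 1 - 2 ^ Nat.log 2 (v - 2 ^ m + 1) + 1) *
      2 ^ (m - Nat.log 2 (v - 2 ^ m + 1)) : ℕ)

namespace CF17

lemma tree_decode (m v : ℕ) (h1 : 2 ^ m ≤ v) (h2 : v < 2 ^ (m + 1) + 2 ^ m - 1) :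
    ∃ e ≤ m, ∃ b < 2 ^ (m - e),
      aFun m v = ((b * 2 ^ e : ℕ) : ℝ) ∧ bFun m v = (((b + 1) * 2 ^ e : ℕ) : ℝ) := by
  have hm1 : (1 : ℕ) ≤ 2 ^ m := Nat.one_le_two_pow
  have hq1 : 1 ≤ v - 2 ^ m + 1 := by omega
  have hqlt : v - 2 ^ m + 1 < 2 ^ (m + 1) := by omega
  have hl : Nat.log 2 (v - 2 ^ m + 1) ≤ m := by
    have := Nat.log_lt_of_lt_pow (b := 2) (by omega : v - 2 ^ m + 1 ≠ 0) hqlt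
    omega
  have hpow_le : 2 ^ Nat.log 2 (v - 2 ^ m + 1) ≤ v - 2 ^ m + 1 :=
    Nat.pow_log_le_self 2 (by omega)
  have hlt : v - 2 ^ m + 1 < 2 ^ (Nat.log 2 (v - 2 ^ m + 1) + 1) :=
    Nat.lt_pow_succ_log_self (by norm_num) _
  have hpow2 : 2 ^ (Nat.log 2 (v - 2 ^ m + 1) + 1)
      = 2 ^ Nat.log 2 (v - 2 ^ m + 1) + 2 ^ Nat.log 2 (v - 2 ^ m + 1) := by ring
  refine ⟨m - Nat.log 2 (v - 2 ^ m + 1), by omega,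
    v - 2 ^ m + 1 - 2 ^ Nat.log 2 (v - 2 ^ m + 1), ?_, ?_, ?_⟩
  · have hml : m - (m - Nat.log 2 (v - 2 ^ m + 1)) = Nat.log 2 (v - 2 ^ m + 1) := by omega
    rw [hml]
    omega
  · rw [aFun, if_neg (by omega)]
  · rw [bFun, if_neg (by omega)]

lemma tree_encode (m e b : ℕ) (he : e ≤ m) (hb : b < 2 ^ (m - e)) :
    aFun m (2 ^ m + (2 ^ (m - e) - 1 + b)) = ((b * 2 ^ e : ℕ) : ℝ) ∧
    bFun m (2 ^ m + (2 ^ (m - e) - 1 + b)) = (((b + 1) * 2 ^ e : ℕ) : ℝ) := by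
  have h1 : (1 : ℕ) ≤ 2 ^ (m - e) := Nat.one_le_two_pow
  have hq : 2 ^ m + (2 ^ (m - e) - 1 + b) - 2 ^ m + 1 = 2 ^ (m - e) + b := by omega
  have hpow2 : 2 ^ (m - e + 1) = 2 ^ (m - e) + 2 ^ (m - e) := by ring
  have hlog : Nat.log 2 (2 ^ (m - e) + b) = m - e :=
    Nat.log_eq_of_pow_le_of_lt_pow (by omega) (by omega)
  have hme : m - (m - e) = e := by omega
  have hbb : 2 ^ (m - e) + b - 2 ^ (m - e) = b := by omega
  have hnot : ¬ (2 ^ m + (2 ^ (m - e) - 1 + b) < 2 ^ m) := by omega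
  constructor
  · rw [aFun, if_neg hnot, hq, hlog, hme, hbb]
  · rw [bFun, if_neg hnot, hq, hlog, hme, hbb]

lemma block_le (m e b : ℕ) (he : e ≤ m) (hb : b < 2 ^ (m - e)) :
    (b + 1) * 2 ^ e ≤ 2 ^ m := by
  calc (b + 1) * 2 ^ e ≤ 2 ^ (m - e) * 2 ^ e := Nat.mul_le_mul_right _ (by omega)
    _ = 2 ^ m := by rw [← pow_add]; congr 1; omega

lemma lengths (m : ℕ) {n : ℕ} (hn : n = 2 ^ (m + 1) + 2 ^ m - 1) (u : Fin n) :
    aFun m u.val < bFun m u.val := by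
  by_cases hu : u.val < 2 ^ m
  · rw [aFun, if_pos hu, bFun, if_pos hu]
    have h1 : (u.val : ℝ) < (2 : ℝ) ^ m := by exact_mod_cast hu
    have h2 : (2 : ℝ) ^ (m + 1) = 2 * 2 ^ m := by ring
    linarith
  · have hlt : u.val < 2 ^ (m + 1) + 2 ^ m - 1 := by rw [← hn]; exact u.isLt
    obtain ⟨e, he, b, hb, hA, hB⟩ := tree_decode m u.val (by omega) hlt
    rw [hA, hB]
    have hp : (0:ℕ) < 2 ^ e := Nat.pow_pos (by norm_num)
    have : b * 2 ^ e < (b + 1) * 2 ^ e := by nlinarith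
    exact_mod_cast this

/-- Characterization of the neighborhood of the tree vertex encoding dyadic
block `(e, b)`: exactly the chain vertices with index in the block. -/
lemma overlap_char (m : ℕ) {n : ℕ} (hn : n = 2 ^ (m + 1) + 2 ^ m - 1)
    (e b : ℕ) (he : e ≤ m) (hb : b < 2 ^ (m - e))
    (u j : Fin n) (hu : u.val = 2 ^ m + (2 ^ (m - e) - 1 + b)) :
    Overlap (fun v : Fin n => aFun m v.val) (fun v => bFun m v.val) u j ↔
      (b * 2 ^ e ≤ j.val ∧ j.val < (b + 1) * 2 ^ e) := by
  obtain ⟨hA, hB⟩ := tree_encode m e b he hb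
  rw [← hu] at hA hB
  have hblk : (b + 1) * 2 ^ e ≤ 2 ^ m := block_le m e b he hb
  have hblkR : (((b + 1) * 2 ^ e : ℕ) : ℝ) ≤ ((2 ^ m : ℕ) : ℝ) := by exact_mod_cast hblk
  by_cases hj : j.val < 2 ^ m
  · have hjA : aFun m j.val = (j.val : ℝ) + 1 / 2 := by rw [aFun, if_pos hj]
    have hjB : bFun m j.val = (2 ^ (m + 1) + 1 : ℝ) - j.val := by rw [bFun, if_pos hj]
    have hjR : (j.val : ℝ) < ((2 ^ m : ℕ) : ℝ) := by exact_mod_cast hj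
    have h2m : ((2 ^ m : ℕ) : ℝ) = 2 ^ m := by push_cast; ring
    have h2m1 : (2 : ℝ) ^ (m + 1) = 2 ^ m + 2 ^ m := by ring
    rw [Overlap, hA, hB, hjA, hjB]
    constructor
    · rintro (⟨h1, h2, h3⟩ | ⟨h1, h2, h3⟩)
      · constructor
        · by_contra hc
          have : (j.val : ℝ) + 1 ≤ ((b * 2 ^ e : ℕ) : ℝ) := by exact_mod_cast (by omega : j.val + 1 ≤ b * 2 ^ e)
          linarith
        · by_contra hc
          have : (((b + 1) * 2 ^ e : ℕ) : ℝ) ≤ (j.val : ℝ) := by exact_mod_cast (by omega : (b + 1) * 2 ^ e ≤ j.val)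
          linarith
      · exfalso
        rw [h2m] at hblkR hjR
        linarith
    · rintro ⟨h1, h2⟩
      left
      have h1R : ((b * 2 ^ e : ℕ) : ℝ) ≤ (j.val : ℝ) := by exact_mod_cast h1
      have h2R : (j.val : ℝ) + 1 ≤ (((b + 1) * 2 ^ e : ℕ) : ℝ) := by exact_mod_cast (by omega : j.val + 1 ≤ (b + 1) * 2 ^ e)
      refine ⟨by linarith, by linarith, ?_⟩
      rw [h2m] at hblkR hjR
      linarith
  · have hjlt : j.val < 2 ^ (m + 1) + 2 ^ m - 1 := by rw [← hn]; exact j.isLt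
    obtain ⟨e', he', b', hb', hA', hB'⟩ := tree_decode m j.val (by omega) hjlt
    rw [Overlap, hA, hB, hA', hB']
    constructor
    · rintro (⟨h1, h2, h3⟩ | ⟨h1, h2, h3⟩)
      · exact absurd ⟨by exact_mod_cast h1, by exact_mod_cast h2, by exact_mod_cast h3⟩
          (dyadic_no_cross e e' b b')
      · exact absurd ⟨by exact_mod_cast h1, by exact_mod_cast h2, by exact_mod_cast h3⟩
          (dyadic_no_cross e' e b' b)
    · rintro ⟨h1, h2⟩
      omega

/-- The counting lemma: if every dyadic block of `[o, o + 2^{ks})` contains a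
color with between `1` and `k` occurrences, then at least `s + 1` colors are
used. -/
lemma dyadic_lemma (k : ℕ) (hk : 1 ≤ k) :
    ∀ (s : ℕ) (f : ℕ → ℕ) (o : ℕ),
      (∀ e ≤ k * s, ∀ b < 2 ^ (k * s - e), ∃ col,
        1 ≤ ((Finset.Ico (o + b * 2 ^ e) (o + b * 2 ^ e + 2 ^ e)).filter
            (fun i => f i = col)).card ∧
        ((Finset.Ico (o + b * 2 ^ e) (o + b * 2 ^ e + 2 ^ e)).filter
            (fun i => f i = col)).card ≤ k) →
      s + 1 ≤ ((Finset.Ico o (o + 2 ^ (k * s))).image f).card := by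
  intro s
  induction s with
  | zero =>
    intro f o _
    have : o ∈ Finset.Ico o (o + 2 ^ (k * 0)) := by
      simp [Nat.one_le_two_pow]
    calc 1 = ({f o} : Finset ℕ).card := by simp
      _ ≤ _ := Finset.card_le_card (by
        intro x hx
        simp at hx
        subst hx
        exact Finset.mem_image_of_mem f this)
  | succ s ih =>
    intro f o h
    have hks : k * (s + 1) = k * s + k := by ring
    -- the whole block has a scarce color x
    obtain ⟨x, hx1, hxk⟩ := h (k * (s + 1)) le_rfl 0 (by simpa using Nat.one_le_two_pow)
    simp only [Nat.zero_mul, Nat.add_zero, zero_mul, add_zero] at hx1 hxk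
    -- find a sub-block avoiding x
    have hsub : ∃ b < 2 ^ k, ∀ i ∈ Finset.Ico (o + b * 2 ^ (k * s))
        (o + b * 2 ^ (k * s) + 2 ^ (k * s)), f i ≠ x := by
      by_contra hc
      push_neg at hc
      choose g hg1 hg2 using hc
      have hinj : ∀ b1 (h1 : b1 < 2 ^ k) b2 (h2 : b2 < 2 ^ k),
          g b1 h1 = g b2 h2 → b1 = b2 := by
        intro b1 h1 b2 h2 heq
        have m1 := Finset.mem_Ico.mp (hg1 b1 h1)
        have m2 := Finset.mem_Ico.mp (hg1 b2 h2)
        rw [heq] at m1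
        have hP : (0:ℕ) < 2 ^ (k * s) := Nat.pow_pos (by norm_num)
        rcases Nat.lt_trichotomy b1 b2 with hlt | heq' | hlt
        · exfalso
          have : (b1 + 1) * 2 ^ (k * s) ≤ b2 * 2 ^ (k * s) :=
            Nat.mul_le_mul_right _ (by omega)
          have := m1.2
          have := m2.1
          nlinarith [m1.1, m1.2, m2.1, m2.2]
        · exact heq'
        · exfalso
          have : (b2 + 1) * 2 ^ (k * s) ≤ b1 * 2 ^ (k * s) :=
            Nat.mul_le_mul_right _ (by omega)
          nlinarith [m1.1, m1.2, m2.1, m2.2]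
      -- map from range (2^k) into the filter set
      have hcard : 2 ^ k ≤ ((Finset.Ico o (o + 2 ^ (k * (s + 1)))).filter
          (fun i => f i = x)).card := by
        rw [← Finset.card_range (2 ^ k)]
        apply Finset.card_le_card_of_injOn
          (fun b => if hb : b < 2 ^ k then g b hb else 0)
        · intro b hb
          have hb' : b < 2 ^ k := Finset.mem_range.mp hb
          simp only [dif_pos hb']
          have hm := Finset.mem_Ico.mp (hg1 b hb')
          refine Finset.mem_filter.mpr ⟨Finset.mem_Ico.mpr ⟨by omega, ?_⟩, hg2 b hb'⟩
          have h2 : (b + 1) * 2 ^ (k * s) ≤ 2 ^ k * 2 ^ (k * s) :=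
            Nat.mul_le_mul_right _ (by omega)
          have hpow : 2 ^ k * 2 ^ (k * s) = 2 ^ (k * (s + 1)) := by
            rw [← pow_add]; congr 1; ring
          nlinarith [hm.1, hm.2]
        · intro b1 hb1 b2 hb2 heq
          have hb1' : b1 < 2 ^ k := Finset.mem_range.mp (Finset.mem_coe.mp hb1)
          have hb2' : b2 < 2 ^ k := Finset.mem_range.mp (Finset.mem_coe.mp hb2)
          simp only [dif_pos hb1', dif_pos hb2'] at heq
          exact hinj b1 hb1' b2 hb2' heq
      have : 2 ^ k ≤ k := le_trans hcard hxk
      have := Nat.lt_two_pow_self (n := k)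
      omega
    obtain ⟨bs, hbs, hempty⟩ := hsub
    -- apply IH to the sub-block
    have hih := ih f (o + bs * 2 ^ (k * s)) ?_
    · -- x occurs in the big block
      obtain ⟨i0, hi0⟩ := Finset.card_pos.mp (by omega :
        0 < ((Finset.Ico o (o + 2 ^ (k * (s + 1)))).filter (fun i => f i = x)).card)
      have hi0' := Finset.mem_filter.mp hi0
      have hxmem : x ∈ (Finset.Ico o (o + 2 ^ (k * (s + 1)))).image f := by
        rw [← hi0'.2]
        exact Finset.mem_image_of_mem f hi0'.1
      have hxnot : x ∉ (Finset.Ico (o + bs * 2 ^ (k * s))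
          (o + bs * 2 ^ (k * s) + 2 ^ (k * s))).image f := by
        intro hx
        obtain ⟨i, hi, hfi⟩ := Finset.mem_image.mp hx
        exact hempty i hi hfi
      have hsubset : insert x ((Finset.Ico (o + bs * 2 ^ (k * s))
          (o + bs * 2 ^ (k * s) + 2 ^ (k * s))).image f) ⊆
          (Finset.Ico o (o + 2 ^ (k * (s + 1)))).image f := by
        intro y hy
        rcases Finset.mem_insert.mp hy with hy | hy
        · subst hy; exact hxmem
        · obtain ⟨i, hi, hfi⟩ := Finset.mem_image.mp hy
          refine Finset.mem_image.mpr ⟨i, ?_, hfi⟩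
          have hi' := Finset.mem_Ico.mp hi
          refine Finset.mem_Ico.mpr ⟨by omega, ?_⟩
          have : (bs + 1) * 2 ^ (k * s) ≤ 2 ^ k * 2 ^ (k * s) :=
            Nat.mul_le_mul_right _ (by omega)
          have hpow : 2 ^ k * 2 ^ (k * s) = 2 ^ (k * (s + 1)) := by
            rw [← pow_add]; congr 1; ring
          nlinarith [hi'.1, hi'.2]
      calc s + 1 + 1 ≤ ((Finset.Ico (o + bs * 2 ^ (k * s))
            (o + bs * 2 ^ (k * s) + 2 ^ (k * s))).image f).card + 1 := by omega
        _ = (insert x ((Finset.Ico (o + bs * 2 ^ (k * s))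
            (o + bs * 2 ^ (k * s) + 2 ^ (k * s))).image f)).card := by
          rw [Finset.card_insert_of_notMem hxnot]
        _ ≤ _ := Finset.card_le_card hsubset
    · -- hypothesis for IH
      intro e hee b hbb
      have hee' : e ≤ k * (s + 1) := by omega
      have hbig : bs * 2 ^ (k * s - e) + b < 2 ^ (k * (s + 1) - e) := by
        have h1 : bs * 2 ^ (k * s - e) + b < (bs + 1) * 2 ^ (k * s - e) := by
          nlinarith
        have h2 : (bs + 1) * 2 ^ (k * s - e) ≤ 2 ^ k * 2 ^ (k * s - e) :=
          Nat.mul_le_mul_right _ (by omega)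
        have h3 : 2 ^ k * 2 ^ (k * s - e) = 2 ^ (k * (s + 1) - e) := by
          rw [← pow_add]; congr 1; omega
        omega
      have hoff : o + (bs * 2 ^ (k * s - e) + b) * 2 ^ e
          = o + bs * 2 ^ (k * s) + b * 2 ^ e := by
        have : 2 ^ (k * s - e) * 2 ^ e = 2 ^ (k * s) := by
          rw [← pow_add]; congr 1; omega
        nlinarith [this]
      have := h e hee' (bs * 2 ^ (k * s - e) + b) hbig
      rwa [hoff] at this

end CF17

namespace CF17

lemma ncard_eq (m : ℕ) {n : ℕ} (hn : n = 2 ^ (m + 1) + 2 ^ m - 1)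
    (e b : ℕ) (he : e ≤ m) (hb : b < 2 ^ (m - e))
    (u : Fin n) (hu : u.val = 2 ^ m + (2 ^ (m - e) - 1 + b))
    (c : Fin n → ℕ) (f : ℕ → ℕ) (hf : ∀ (i : ℕ) (h : i < n), f i = c ⟨i, h⟩) (col : ℕ) :
    {j | Overlap (fun v : Fin n => aFun m v.val) (fun v => bFun m v.val) u j ∧ c j = col}.ncard
      = ((Finset.Ico (b * 2 ^ e) (b * 2 ^ e + 2 ^ e)).filter (fun i => f i = col)).card := by
  have hset : {j | Overlap (fun v : Fin n => aFun m v.val) (fun v => bFun m v.val) u j ∧ c j = col}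
      = ↑(Finset.univ.filter (fun j : Fin n =>
          (b * 2 ^ e ≤ j.val ∧ j.val < (b + 1) * 2 ^ e) ∧ c j = col)) := by
    ext j
    simp only [Set.mem_setOf_eq, Finset.coe_filter, Finset.mem_univ, true_and,
      Set.mem_setOf_eq]
    rw [overlap_char m hn e b he hb u j hu]
  rw [hset, Set.ncard_coe_finset]
  apply Finset.card_bij (fun j _ => j.val)
  · intro j hj
    have hj' := Finset.mem_filter.mp hj
    have hm : (b + 1) * 2 ^ e = b * 2 ^ e + 2 ^ e := by ring
    refine Finset.mem_filter.mpr ⟨Finset.mem_Ico.mpr ⟨hj'.2.1.1, by omega⟩, ?_⟩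
    rw [hf j.val j.isLt]
    simpa using hj'.2.2
  · intro j1 _ j2 _ hval
    exact Fin.ext hval
  · intro i hi
    have hi' := Finset.mem_filter.mp hi
    have hio := Finset.mem_Ico.mp hi'.1
    have hblk : (b + 1) * 2 ^ e ≤ 2 ^ m := block_le m e b he hb
    have h2 : (1:ℕ) ≤ 2 ^ (m + 1) := Nat.one_le_two_pow
    have hin : i < n := by
      have hm : (b + 1) * 2 ^ e = b * 2 ^ e + 2 ^ e := by ring
      omega
    refine ⟨⟨i, hin⟩, Finset.mem_filter.mpr ⟨Finset.mem_univ _, ⟨⟨?_, ?_⟩, ?_⟩⟩, rfl⟩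
    · show b * 2 ^ e ≤ i
      omega
    · show i < (b + 1) * 2 ^ e
      have hm : (b + 1) * 2 ^ e = b * 2 ^ e + 2 ^ e := by ring
      omega
    · show c ⟨i, hin⟩ = col
      rw [← hf i hin]
      exact hi'.2

end CF17

/-- For every `k ≥ 1` and `t ≥ 1` there is a family of
`n = 2^{k(t-1)+1} + 2^{k(t-1)} - 1` intervals whose overlap graph (a circle
graph) requires at least `t` colors in any `k`-CF coloring. -/
theorem stmt17 (k t : ℕ) (hk : 1 ≤ k) (ht : 1 ≤ t) :
    ∃ a b : Fin (2 ^ (k * (t - 1) + 1) + 2 ^ (k * (t - 1)) - 1) → ℝ,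
      (∀ i, a i < b i) ∧
      ∀ c : Fin (2 ^ (k * (t - 1) + 1) + 2 ^ (k * (t - 1)) - 1) → ℕ,
        (∀ i, (∃ j, Overlap a b i j) →
          ∃ col, 1 ≤ {j | Overlap a b i j ∧ c j = col}.ncard ∧
            {j | Overlap a b i j ∧ c j = col}.ncard ≤ k) →
        t ≤ (Finset.univ.image c).card := by
  set m := k * (t - 1) with hm
  set n := 2 ^ (m + 1) + 2 ^ m - 1 with hn
  have h2m1 : (2:ℕ) ≤ 2 ^ (m + 1) := by
    calc (2:ℕ) = 2 ^ 1 := by norm_num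
      _ ≤ 2 ^ (m + 1) := Nat.pow_le_pow_right (by norm_num) (by omega)
  have h2m : (1:ℕ) ≤ 2 ^ m := Nat.one_le_two_pow
  refine ⟨fun v : Fin n => CF17.aFun m v.val, fun v => CF17.bFun m v.val,
    fun i => CF17.lengths m rfl i, ?_⟩
  intro c hc
  set f : ℕ → ℕ := fun i => if h : i < n then c ⟨i, h⟩ else 0 with hfdef
  have hf : ∀ (i : ℕ) (h : i < n), f i = c ⟨i, h⟩ := by
    intro i h
    simp only [hfdef, dif_pos h]
  have key := CF17.dyadic_lemma k hk (t - 1) f 0 ?_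
  · -- conclude
    have hsub : (Finset.Ico 0 (0 + 2 ^ (k * (t - 1)))).image f ⊆ Finset.univ.image c := by
      intro y hy
      obtain ⟨i, hi, hfi⟩ := Finset.mem_image.mp hy
      have hi' := Finset.mem_Ico.mp hi
      have hin : i < n := by
        have h0 : i < 2 ^ m := by rw [hm]; omega
        omega
      rw [hf i hin] at hfi
      exact Finset.mem_image.mpr ⟨⟨i, hin⟩, Finset.mem_univ _, hfi⟩
    have := Finset.card_le_card hsub
    omega
  · -- verify the dyadic hypothesis using tree vertices
    intro e he b hb
    -- he : e ≤ k * (t-1) = m ; hb : b < 2 ^ (m - e)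
    have he' : e ≤ m := he
    have hb' : b < 2 ^ (m - e) := hb
    have h2me : (1:ℕ) ≤ 2 ^ (m - e) := Nat.one_le_two_pow
    have huval : 2 ^ m + (2 ^ (m - e) - 1 + b) < n := by
      have : 2 ^ (m - e) ≤ 2 ^ m := Nat.pow_le_pow_right (by norm_num) (by omega)
      omega
    set u : Fin n := ⟨2 ^ m + (2 ^ (m - e) - 1 + b), huval⟩ with hudef
    have hblk : (b + 1) * 2 ^ e ≤ 2 ^ m := CF17.block_le m e b he' hb'
    have hwlt : b * 2 ^ e < n := by
      have : b * 2 ^ e < (b + 1) * 2 ^ e := by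
        have hp : (0:ℕ) < 2 ^ e := Nat.pow_pos (by norm_num)
        nlinarith
      omega
    have hchar : ∀ j : Fin n,
        Overlap (fun v : Fin n => CF17.aFun m v.val) (fun v => CF17.bFun m v.val) u j ↔
        (b * 2 ^ e ≤ j.val ∧ j.val < (b + 1) * 2 ^ e) :=
      fun j => CF17.overlap_char m rfl e b he' hb' u j rfl
    have hne : ∃ j, Overlap (fun v : Fin n => CF17.aFun m v.val)
        (fun v => CF17.bFun m v.val) u j := by
      refine ⟨⟨b * 2 ^ e, hwlt⟩, (hchar _).mpr ⟨le_rfl, ?_⟩⟩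
      have hp : (0:ℕ) < 2 ^ e := Nat.pow_pos (by norm_num)
      simp only
      nlinarith
    obtain ⟨col, h1, h2⟩ := hc u hne
    rw [CF17.ncard_eq m rfl e b he' hb' u rfl c f hf col] at h1 h2
    refine ⟨col, ?_, ?_⟩
    · simpa using h1
    · simpa using h2
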